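/- For any a < b, k ≥ 1, n ≥ 1, and points a ≤ x_1 < ... < x_n ≤ b, the quantity (x_1 - a)^{k+1}/(k+1) + Σ_{i=1}^{n-1} (x_{i+1} - x_i)^{k+1}/4^k + (b - x_n)^{k+1}/(k+1) is bounded below by C (b-a)^{k+1} (n+1)^{-k} for some constant C > 0 depending only on k (e.g. C = 4^{-k}). -/

import Mathlib

theorem error_sum_lower_bound (k : ℕ) (hk : 1 ≤ k) :
    ∃ C : ℝ, 0 < C ∧
      ∀ (a b : ℝ), a < b → ∀ (n : ℕ) (hn : 1 ≤ n), ∀ x : Fin n → ℝ,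
        StrictMono x → (∀ i, a ≤ x i) → (∀ i, x i ≤ b) →
        C * (b - a)^(k+1) / (n + 1)^k ≤
          (x ⟨0, hn⟩ - a)^(k+1) / ((k : ℝ) + 1)
          + (∑ i : Fin (n - 1),
              (x ⟨i.1 + 1, by have := i.2; omega⟩ - x ⟨i.1, by have := i.2; omega⟩)^(k+1) / 4^k)
          + (b - x ⟨n - 1, by omega⟩)^(k+1) / ((k : ℝ) + 1) := by
  refine ⟨(4:ℝ)⁻¹ ^ k, by positivity, ?_⟩
  intro a b hab n hn x hsm hax hxb
  obtain ⟨m, rfl⟩ : ∃ m, n = m + 1 := ⟨n - 1, by omega⟩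
  -- coefficient comparison
  have hcoef : ((k:ℝ) + 1) ≤ 4 ^ k := by
    have h1 : (k + 1 : ℕ) ≤ 4 ^ k := by
      calc k + 1 ≤ 2 ^ k := Nat.lt_two_pow_self (n := k)
        _ ≤ 4 ^ k := Nat.pow_le_pow_left (by norm_num) k
    exact_mod_cast h1
  set y : ℕ → ℝ := fun i =>
    if h0 : i = 0 then a else if h1 : i ≤ m + 1 then x ⟨i - 1, by omega⟩ else b with hy
  have hy0 : y 0 = a := by simp [hy]
  have hyi : ∀ i, (h : i ≤ m) → y (i + 1) = x ⟨i, Nat.lt_succ_of_le h⟩ := by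
    intro i h
    simp only [hy]
    rw [dif_neg (by omega), dif_pos (by omega)]
    rfl
  have hylast : y (m + 2) = b := by
    simp only [hy]
    rw [dif_neg (by omega), dif_neg (by omega)]
  -- gaps nonneg
  have hgap : ∀ i ∈ Finset.range (m + 2), (0:ℝ) ≤ y (i + 1) - y i := by
    intro i hi
    simp only [Finset.mem_range] at hi
    rcases Nat.eq_or_lt_of_le (Nat.zero_le i) with h0 | h0
    · rw [← h0, hy0, hyi 0 (Nat.zero_le m)]
      exact sub_nonneg.2 (hax _)
    · rcases Nat.lt_or_ge i (m + 1) with h1 | h1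
      · obtain ⟨j, rfl⟩ : ∃ j, i = j + 1 := ⟨i - 1, by omega⟩
        rw [hyi (j + 1) (by omega), hyi j (by omega)]
        have := hsm.monotone (a := ⟨j, by omega⟩) (b := ⟨j + 1, by omega⟩)
          (by simp [Fin.le_def])
        linarith
      · have : i = m + 1 := by omega
        subst this
        rw [hylast, hyi m le_rfl]
        exact sub_nonneg.2 (hxb _)
  -- telescoping
  have htel : ∑ i ∈ Finset.range (m + 2), (y (i + 1) - y i) = b - a := by
    rw [Finset.sum_range_sub y (m + 2), hylast, hy0]
  -- power mean
  have hpm : (b - a) ^ (k + 1) / ((m:ℝ) + 2) ^ k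
      ≤ ∑ i ∈ Finset.range (m + 2), (y (i + 1) - y i) ^ (k + 1) := by
    have := pow_sum_div_card_le_sum_pow (s := Finset.range (m + 2))
      (f := fun i => y (i + 1) - y i) hgap k
    rwa [htel, Finset.card_range, show ((m + 2 : ℕ) : ℝ) = (m:ℝ) + 2 from by push_cast; ring]
      at this
  -- split and compare
  have hsplit : (∑ i ∈ Finset.range (m + 2), (y (i + 1) - y i) ^ (k + 1)) * (4:ℝ)⁻¹ ^ k ≤
      (x ⟨0, hn⟩ - a)^(k+1) / ((k : ℝ) + 1)
      + (∑ i : Fin (m + 1 - 1),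
          (x ⟨i.1 + 1, by have := i.2; omega⟩ - x ⟨i.1, by have := i.2; omega⟩)^(k+1) / 4^k)
      + (b - x ⟨m + 1 - 1, by omega⟩)^(k+1) / ((k : ℝ) + 1) := by
    rw [Finset.sum_mul, Finset.sum_range_succ, Finset.sum_range_succ']
    have e1 : ∑ i : Fin (m + 1 - 1),
          (x ⟨i.1 + 1, by have := i.2; omega⟩ - x ⟨i.1, by have := i.2; omega⟩)^(k+1) / 4^k
        = ∑ i ∈ Finset.range m, (y (i + 1 + 1) - y (i + 1)) ^ (k + 1) * (4:ℝ)⁻¹ ^ k := by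
      have e0 : ∀ i : Fin (m + 1 - 1),
          (x ⟨i.1 + 1, by have := i.2; omega⟩ - x ⟨i.1, by have := i.2; omega⟩)^(k+1) / 4^k
          = (fun j : ℕ => (y (j + 1 + 1) - y (j + 1)) ^ (k + 1) * (4:ℝ)⁻¹ ^ k) i.1 := by
        intro i
        have hi := i.2
        simp only
        rw [hyi (i.1 + 1) (by omega), hyi i.1 (by omega), div_eq_mul_inv, ← inv_pow]
      rw [Finset.sum_congr rfl fun i _ => e0 i]
      exact Fin.sum_univ_eq_sum_range
        (fun j => (y (j + 1 + 1) - y (j + 1)) ^ (k + 1) * (4:ℝ)⁻¹ ^ k) m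
    rw [e1]
    have hle : ∀ u : ℝ, 0 ≤ u → u ^ (k + 1) * (4:ℝ)⁻¹ ^ k ≤ u ^ (k + 1) / ((k : ℝ) + 1) := by
      intro u hu
      rw [inv_pow, div_eq_mul_inv]
      exact mul_le_mul_of_nonneg_left (inv_anti₀ (by positivity) hcoef)
        (by positivity)
    have h0 : (y (0 + 1) - y 0) ^ (k + 1) * (4:ℝ)⁻¹ ^ k
        ≤ (x ⟨0, hn⟩ - a)^(k+1) / ((k : ℝ) + 1) := by
      rw [hy0, hyi 0 (Nat.zero_le m)]
      exact hle _ (sub_nonneg.2 (hax _))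
    have hl : (y (m + 1 + 1) - y (m + 1)) ^ (k + 1) * (4:ℝ)⁻¹ ^ k
        ≤ (b - x ⟨m + 1 - 1, by omega⟩)^(k+1) / ((k : ℝ) + 1) := by
      rw [show m + 1 + 1 = m + 2 from rfl, hylast, hyi m le_rfl]
      exact hle _ (sub_nonneg.2 (hxb _))
    linarith
  have h4 : (0:ℝ) < (4:ℝ)⁻¹ ^ k := by positivity
  calc (4:ℝ)⁻¹ ^ k * (b - a)^(k+1) / (((m + 1 : ℕ):ℝ) + 1)^k
      = (b - a) ^ (k + 1) / ((m:ℝ) + 2) ^ k * (4:ℝ)⁻¹ ^ k := by push_cast; ring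
    _ ≤ (∑ i ∈ Finset.range (m + 2), (y (i + 1) - y i) ^ (k + 1)) * (4:ℝ)⁻¹ ^ k :=
        mul_le_mul_of_nonneg_right hpm h4.le
    _ ≤ _ := hsplit
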